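/- arXiv:2510.10773 — 5 statements merged into one kernel-verified Lean document; each statement's English description precedes it below -/
import Mathlib

section
/- Let G be a group, A an abelian group (written multiplicatively, trivial G-module), and α : G³ → A a group 3-cocycle. Let ρ : Γ → G be a group homomorphism, h ∈ G, and ρ' : Γ → G the conjugate homomorphism ρ'(a) = h·ρ(a)·h⁻¹. Define β : Γ² → A by β(a,b) = α(h, ρ(a), ρ(b)) · α(ρ'(a), ρ'(b), h) · α(ρ'(a), h, ρ(b))⁻¹. Then the ratio of pullback 3-cocycles satisfies (ρ*α)(a,b,c) / (ρ'*α)(a,b,c) = (dβ)(a,b,c) for all a,b,c ∈ Γ, where dβ(a,b,c) = β(b,c)·β(ab,c)⁻¹·β(a,bc)·β(a,b)⁻¹. -/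
/-- For a 3-cocycle `α` on `G`, a homomorphism `ρ : Γ → G`, and the conjugate
homomorphism `ρ'(a) = h ρ(a) h⁻¹`, the ratio of pullback 3-cocycles `ρ*α / ρ'*α`
is the coboundary of the explicit 2-cochain `β`. -/
theorem ratio_of_pullbacks_is_coboundary
    {G Γ A : Type*} [Group G] [Group Γ] [CommGroup A]
    (α : G → G → G → A)
    (hα : ∀ g₁ g₂ g₃ g₄ : G,
      α g₂ g₃ g₄ * (α (g₁ * g₂) g₃ g₄)⁻¹ * α g₁ (g₂ * g₃) g₄ *
        (α g₁ g₂ (g₃ * g₄))⁻¹ * α g₁ g₂ g₃ = 1)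
    (ρ : Γ →* G) (h : G) (ρ' : Γ → G)
    (hρ' : ∀ a, ρ' a = h * ρ a * h⁻¹)
    (β : Γ → Γ → A)
    (hβ : ∀ a b, β a b = α h (ρ a) (ρ b) * α (ρ' a) (ρ' b) h * (α (ρ' a) h (ρ b))⁻¹) :
    ∀ a b c : Γ,
      α (ρ a) (ρ b) (ρ c) / α (ρ' a) (ρ' b) (ρ' c)
        = β b c * (β (a * b) c)⁻¹ * β a (b * c) * (β a b)⁻¹ := by
  intro a b c
  simp only [hβ, hρ', map_mul]
  set x := ρ a
  set y := ρ b
  set z := ρ c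
  have E1 := hα h x y z
  have E2 := hα (h*x*h⁻¹) h y z
  have E3 := hα (h*x*h⁻¹) (h*y*h⁻¹) h z
  have E4 := hα (h*x*h⁻¹) (h*y*h⁻¹) (h*z*h⁻¹) h
  simp only [mul_assoc, inv_mul_cancel_left, mul_inv_cancel_left,
    inv_mul_cancel, mul_one, one_mul] at E1 E2 E3 E4 ⊢
  have key := congrArg₂ (· * ·) (congrArg₂ (· / ·) E1 E2) (congrArg₂ (· / ·) E3 E4)
  simp only [div_one, mul_one] at key
  rw [← div_eq_one, ← key]
  have iffl : ∀ u v : A, u = v ↔ Additive.ofMul u = Additive.ofMul v := fun _ _ => Iff.rfl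
  rw [iffl]
  simp only [ofMul_div, ofMul_mul, ofMul_inv]
  abel
end

section
/- Let G be a group, A an abelian group, α : G³ → A a group 3-cocycle, ρ : Γ → G a homomorphism, h ∈ G, and ρ'(a) = h·ρ(a)·h⁻¹. Suppose γ : Γ² → A is a 2-cochain with dγ = ρ*α. Define β(a,b) = α(h,ρ(a),ρ(b))·α(ρ'(a),ρ'(b),h)·α(ρ'(a),h,ρ(b))⁻¹ and set ᵸγ(a,b) = γ(a,b)/β(a,b). Then d(ᵸγ) = ρ'*α. -/
private lemma auxAdd4 {A : Type*} [AddCommGroup A] {L R c1 c2 c3 c4 : A}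
    (h1 : c1 = 0) (h2 : c2 = 0) (h3 : c3 = 0) (h4 : c4 = 0)
    (h : L + c2 + c4 = R + c1 + c3) : L = R := by
  rw [h1, h2, h3, h4] at h; simpa using h

private lemma auxAdd2 {A : Type*} [AddCommGroup A] {K1 K2 L R : A}
    (h : K1 = K2) (e : L + K2 = R + K1) : L = R := by
  rw [h] at e; exact add_right_cancel e

private lemma core {G A : Type*} [Group G] [CommGroup A] (α : G → G → G → A)
    (hα : ∀ g₁ g₂ g₃ g₄ : G,
      α g₂ g₃ g₄ * (α (g₁ * g₂) g₃ g₄)⁻¹ * α g₁ (g₂ * g₃) g₄ *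
        (α g₁ g₂ (g₃ * g₄))⁻¹ * α g₁ g₂ g₃ = 1)
    (h x y z : G) :
    α x y z * (α h x y * α (h*x*h⁻¹) (h*y*h⁻¹) h * (α (h*x*h⁻¹) h y)⁻¹)
      * (α h (x*y) z * α (h*(x*y)*h⁻¹) (h*z*h⁻¹) h * (α (h*(x*y)*h⁻¹) h z)⁻¹)
    = α (h*x*h⁻¹) (h*y*h⁻¹) (h*z*h⁻¹)
      * (α h y z * α (h*y*h⁻¹) (h*z*h⁻¹) h * (α (h*y*h⁻¹) h z)⁻¹)
      * (α h x (y*z) * α (h*x*h⁻¹) (h*(y*z)*h⁻¹) h * (α (h*x*h⁻¹) h (y*z))⁻¹) := by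
  have H1 := hα h x y z
  have H2 := hα (h*x*h⁻¹) h y z
  have H3 := hα (h*x*h⁻¹) (h*y*h⁻¹) h z
  have H4 := hα (h*x*h⁻¹) (h*y*h⁻¹) (h*z*h⁻¹) h
  simp only [mul_assoc, inv_mul_cancel_left, mul_inv_cancel_left, inv_mul_cancel,
    mul_inv_cancel, mul_one, one_mul] at H1 H2 H3 H4 ⊢
  rw [← Additive.ofMul.apply_eq_iff_eq]
  replace H1 := congrArg Additive.ofMul H1
  replace H2 := congrArg Additive.ofMul H2
  replace H3 := congrArg Additive.ofMul H3
  replace H4 := congrArg Additive.ofMul H4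
  simp only [ofMul_mul, ofMul_inv, ofMul_one] at H1 H2 H3 H4
  simp only [ofMul_mul, ofMul_inv]
  exact auxAdd4 H1 H2 H3 H4 (by abel)

/-- If `dγ = ρ*α` and `ᵸγ = γ/β` for the explicit 2-cochain `β` associated to
conjugation by `h`, then `d(ᵸγ) = ρ'*α` for the conjugate homomorphism `ρ'`. -/
theorem conjugated_cochain_trivializes_conjugated_pullback
    {G Γ A : Type*} [Group G] [Group Γ] [CommGroup A]
    (α : G → G → G → A)
    (hα : ∀ g₁ g₂ g₃ g₄ : G,
      α g₂ g₃ g₄ * (α (g₁ * g₂) g₃ g₄)⁻¹ * α g₁ (g₂ * g₃) g₄ *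
        (α g₁ g₂ (g₃ * g₄))⁻¹ * α g₁ g₂ g₃ = 1)
    (ρ : Γ →* G) (h : G) (ρ' : Γ → G)
    (hρ' : ∀ a, ρ' a = h * ρ a * h⁻¹)
    (γ : Γ → Γ → A)
    (hγ : ∀ a b c : Γ,
      γ b c * (γ (a * b) c)⁻¹ * γ a (b * c) * (γ a b)⁻¹ = α (ρ a) (ρ b) (ρ c))
    (β : Γ → Γ → A)
    (hβ : ∀ a b, β a b = α h (ρ a) (ρ b) * α (ρ' a) (ρ' b) h * (α (ρ' a) h (ρ b))⁻¹)
    (hγ' : Γ → Γ → A)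
    (hhγ' : ∀ a b, hγ' a b = γ a b / β a b) :
    ∀ a b c : Γ,
      hγ' b c * (hγ' (a * b) c)⁻¹ * hγ' a (b * c) * (hγ' a b)⁻¹
        = α (ρ' a) (ρ' b) (ρ' c) := by
  intro a b c
  have key := core α hα h (ρ a) (ρ b) (ρ c)
  have hBab := hβ a b
  have hBbc := hβ b c
  have hBabc := hβ (a*b) c
  have hBabc2 := hβ a (b*c)
  simp only [hρ', map_mul] at hBab hBbc hBabc hBabc2
  rw [← hBab, ← hBbc, ← hBabc, ← hBabc2, ← hγ a b c] at key
  simp only [hhγ', hρ']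
  rw [← Additive.ofMul.apply_eq_iff_eq]
  replace key := congrArg Additive.ofMul key
  simp only [ofMul_mul, ofMul_inv, ofMul_div] at key ⊢
  exact auxAdd2 key (by abel)
end

section
/- Let G be a group, A an abelian group, α a normalized 3-cocycle on G with values in A, g ∈ G, and ρ̃ : ℤ² → G given by ρ̃(x,y) = gˣ. Let e₁ = (1,0), e₂ = (0,1). Suppose γ̃ : ℤ² × ℤ² → A satisfies dγ̃ = ρ̃*α and γ̃(e₁,e₂) = γ̃(e₂,e₁). Then for every integer b ≥ 0, γ̃(b·e₁ + e₂, e₁) / γ̃(e₁, b·e₁ + e₂) = ∏_{j=0}^{b−1} α(g, gʲ, g)⁻¹. -/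
/-- Dehn twist computation: if `dγ̃ = ρ̃*α` for `ρ̃(x,y) = gˣ` and
`γ̃(e₁,e₂) = γ̃(e₂,e₁)`, then
`γ̃(b·e₁+e₂, e₁)/γ̃(e₁, b·e₁+e₂) = ∏_{j=0}^{b-1} α(g,gʲ,g)⁻¹` for all `b ≥ 0`. -/
theorem dehn_twist_ratio
    {G A : Type*} [Group G] [CommGroup A]
    (α : G → G → G → A)
    (hα : ∀ g₁ g₂ g₃ g₄ : G,
      α g₂ g₃ g₄ * (α (g₁ * g₂) g₃ g₄)⁻¹ * α g₁ (g₂ * g₃) g₄ *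
        (α g₁ g₂ (g₃ * g₄))⁻¹ * α g₁ g₂ g₃ = 1)
    (hnorm : ∀ j k l : G, α 1 k l = 1 ∧ α j 1 l = 1 ∧ α j k 1 = 1)
    (g : G)
    (γ : ℤ × ℤ → ℤ × ℤ → A)
    (hγ : ∀ u v w : ℤ × ℤ,
      γ v w * (γ (u + v) w)⁻¹ * γ u (v + w) * (γ u v)⁻¹
        = α (g ^ u.1) (g ^ v.1) (g ^ w.1))
    (hsym : γ (1, 0) (0, 1) = γ (0, 1) (1, 0)) :
    ∀ b : ℕ,
      γ ((b : ℤ), 1) (1, 0) / γ (1, 0) ((b : ℤ), 1)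
        = ∏ j ∈ Finset.range b, (α g (g ^ (j : ℤ)) g)⁻¹ := by
  intro b
  induction b with
  | zero =>
    simpa using div_eq_one.mpr hsym.symm
  | succ b ih =>
    have h := hγ (1, 0) ((b : ℤ), 1) (1, 0)
    simp only [Prod.mk_add_mk, zpow_one, add_zero, zero_add] at h
    rw [add_comm (1 : ℤ) (b : ℤ)] at h
    rw [Finset.prod_range_succ, ← ih]
    push_cast
    rw [← h]
    simp only [div_eq_mul_inv, mul_inv, inv_inv]
    simp [mul_comm, mul_left_comm, mul_assoc]
end

section
/- Fix n ≥ 1, N ∈ ℤ, let G = ℤ/nℤ with α_N the 3-cocycle α_N(j,k,l) = 1 if k+l < n and e^{2πiNj/n} if k+l ≥ n (canonical representatives). Let ρ̃ : ℤ² → ℤ/nℤ be ρ̃(x,y) = x mod n, and let γ̃ : ℤ²×ℤ² → U(1) be defined by γ̃((x,y),(z,w)) = ∏_{k=0}^{x−1} α_N(1, k, z) for x ≥ 0 and ∏_{k=1}^{−x} α_N(1, −k, z)⁻¹ for x ≤ 0. Let A = [[a,b],[c,d]] ∈ SL₂(ℤ) with a ≡ 1 (mod n) and b ≡ 0 (mod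 n). Then γ̃(b·e₁ + d·e₂, a·e₁ + c·e₂) / γ̃(a·e₁ + c·e₂, b·e₁ + d·e₂) = e^{2πiNb/n²}, where e₁ = (1,0) and e₂ = (0,1). -/
open scoped Real

/-- The 3-cocycle `α_N(j,k,l) = 1` if `k+l < n` (canonical representatives)
and `e^{2πiNj/n}` otherwise. -/
noncomputable def alphaN (n : ℕ) (N : ℤ) (j k l : ZMod n) : Circle :=
  if k.val + l.val < n then 1 else Circle.exp (2 * π * N * j.val / n)

/-- The explicit trivializing 2-cochain `γ̃` on `ℤ²` for the pullback of `α_N`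
along `ρ̃(x,y) = x mod n`. -/
noncomputable def gammaTildeN (n : ℕ) (N : ℤ) (u v : ℤ × ℤ) : Circle :=
  if 0 ≤ u.1 then
    ∏ k ∈ Finset.range u.1.toNat, alphaN n N 1 ((k : ℤ) : ZMod n) ((v.1 : ZMod n))
  else
    ∏ k ∈ Finset.range (-u.1).toNat, (alphaN n N 1 ((-(k + 1) : ℤ) : ZMod n) ((v.1 : ZMod n)))⁻¹

lemma Circle.exp_pow (x : ℝ) (m : ℕ) : Circle.exp x ^ m = Circle.exp (m * x) := by
  induction m with
  | zero => simp
  | succ m ih => rw [pow_succ, ih, ← Circle.exp_add]; push_cast; ring_nf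

lemma alphaN_right_zero (n : ℕ) (hn : 0 < n) (N : ℤ) (k : ZMod n) :
    alphaN n N 1 k 0 = 1 := by
  haveI : NeZero n := ⟨hn.ne'⟩
  simp [alphaN, ZMod.val_lt]

lemma blockProd (n : ℕ) (hn : 0 < n) (N : ℤ) :
    ∏ i ∈ Finset.range n, alphaN n N 1 ((i : ℕ) : ZMod n) 1
      = Circle.exp (2 * π * N * ((1 : ZMod n)).val / n) := by
  haveI : NeZero n := ⟨hn.ne'⟩
  rcases eq_or_lt_of_le (show 1 ≤ n from hn) with h1 | h1
  · -- n = 1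
    have hn1 : n = 1 := h1.symm
    subst hn1
    have h0 : ((1 : ZMod 1)).val = 0 := rfl
    simp [alphaN, h0]
  · -- 1 < n
    haveI : Fact (1 < n) := ⟨h1⟩
    have hv1 : ((1 : ZMod n)).val = 1 := ZMod.val_one n
    obtain ⟨n', rfl⟩ : ∃ n', n = n' + 1 := ⟨n - 1, by omega⟩
    rw [Finset.prod_range_succ]
    have hpre : ∏ i ∈ Finset.range n', alphaN (n' + 1) N 1 ((i : ℕ) : ZMod (n' + 1)) 1 = 1 := by
      apply Finset.prod_eq_one
      intro i hi
      have hi' : i < n' := Finset.mem_range.mp hi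
      have hvi : (((i : ℕ) : ZMod (n' + 1))).val = i := ZMod.val_natCast_of_lt (by omega)
      simp [alphaN, hvi, hv1]
      omega
    rw [hpre, one_mul]
    have hvn : (((n' : ℕ) : ZMod (n' + 1))).val = n' := ZMod.val_natCast_of_lt (by omega)
    simp [alphaN, hvn, hv1]

lemma prodPos (n : ℕ) (hn : 0 < n) (N : ℤ) (m : ℕ) :
    ∏ k ∈ Finset.range (n * m), alphaN n N 1 ((k : ℤ) : ZMod n) 1
      = Circle.exp (2 * π * N * ((1 : ZMod n)).val / n) ^ m := by
  induction m with
  | zero => simp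
  | succ m ih =>
    rw [Nat.mul_succ, Finset.prod_range_add, ih, pow_succ]
    congr 1
    have : ∀ i ∈ Finset.range n,
        alphaN n N 1 (((n * m + i : ℕ) : ℤ) : ZMod n) 1
          = alphaN n N 1 ((i : ℕ) : ZMod n) 1 := by
      intro i _
      congr 1
      push_cast
      simp
    rw [Finset.prod_congr rfl this, blockProd n hn N]

lemma prodNeg (n : ℕ) (hn : 0 < n) (N : ℤ) (m : ℕ) :
    ∏ k ∈ Finset.range (n * m), alphaN n N 1 ((-((k : ℤ) + 1) : ℤ) : ZMod n) 1
      = Circle.exp (2 * π * N * ((1 : ZMod n)).val / n) ^ m := by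
  induction m with
  | zero => simp
  | succ m ih =>
    rw [Nat.mul_succ, Finset.prod_range_add, ih, pow_succ]
    congr 1
    have h1 : ∀ i ∈ Finset.range n,
        alphaN n N 1 ((-(((n * m + i : ℕ) : ℤ) + 1) : ℤ) : ZMod n) 1
          = alphaN n N 1 (((n - 1 - i : ℕ)) : ZMod n) 1 := by
      intro i hi
      have hi' : i < n := Finset.mem_range.mp hi
      congr 1
      have e1 : (((n - 1 - i : ℕ)) : ZMod n) = (((n : ℤ) - 1 - i : ℤ) : ZMod n) := by
        rw [← Int.cast_natCast]
        congr 1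
        omega
      rw [e1]
      push_cast
      simp [ZMod.natCast_self]
      ring
    rw [Finset.prod_congr rfl h1]
    rw [← blockProd n hn N]
    exact Finset.prod_range_reflect (fun j => alphaN n N 1 ((j : ℕ) : ZMod n) 1) n

lemma gamma_right_zero (n : ℕ) (hn : 0 < n) (N : ℤ) (u : ℤ × ℤ) (z w : ℤ)
    (hz : ((z : ℤ) : ZMod n) = 0) : gammaTildeN n N u (z, w) = 1 := by
  unfold gammaTildeN
  simp only [hz]
  split
  · exact Finset.prod_eq_one fun k _ => alphaN_right_zero n hn N _
  · exact Finset.prod_eq_one fun k _ => by rw [alphaN_right_zero n hn N, inv_one]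

lemma exp_arg_eq (n : ℕ) (hn : 0 < n) (N : ℤ) (m : ℤ) :
    Circle.exp ((m : ℝ) * (2 * π * N * ((1 : ZMod n)).val / n))
      = Circle.exp (2 * π * N * ((n : ℤ) * m) / (n : ℝ) ^ 2) := by
  rcases eq_or_lt_of_le (show 1 ≤ n from hn) with h1 | h1
  · have hn1 : n = 1 := h1.symm
    subst hn1
    have h0 : ((1 : ZMod 1)).val = 0 := rfl
    rw [h0]
    push_cast
    rw [show (m : ℝ) * (2 * π * N * 0 / 1) = 0 by ring, Circle.exp_zero]
    rw [show 2 * π * (N : ℝ) * (1 * m) / (1 : ℝ) ^ 2 = 2 * π * ((N * m : ℤ) : ℝ) by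
      push_cast; ring]
    exact (Circle.exp_two_pi_mul_int (N * m)).symm
  · haveI : Fact (1 < n) := ⟨h1⟩
    have hv1 : ((1 : ZMod n)).val = 1 := ZMod.val_one n
    rw [hv1]
    congr 1
    have hnR : (n : ℝ) ≠ 0 := by positivity
    push_cast
    field_simp

/-- The character of `Γ₁(n)` computed from the 2-group cocycle data:
for `A = [[a,b],[c,d]] ∈ SL₂(ℤ)` with `a ≡ 1`, `b ≡ 0 (mod n)`,
`γ̃(b e₁ + d e₂, a e₁ + c e₂)/γ̃(a e₁ + c e₂, b e₁ + d e₂) = e^{2πiNb/n²}`. -/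
theorem character_value_on_Gamma1
    (n : ℕ) (hn : 0 < n) (N : ℤ) (a b c d : ℤ)
    (hdet : a * d - b * c = 1)
    (ha : a ≡ 1 [ZMOD (n : ℤ)]) (hb : b ≡ 0 [ZMOD (n : ℤ)]) :
    gammaTildeN n N (b, d) (a, c) / gammaTildeN n N (a, c) (b, d)
      = Circle.exp (2 * π * N * b / (n : ℝ) ^ 2) := by
  haveI : NeZero n := ⟨hn.ne'⟩
  have haz : ((a : ℤ) : ZMod n) = 1 := by
    have := (ZMod.intCast_eq_intCast_iff a 1 n).mpr ha
    simpa using this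
  have hbz : ((b : ℤ) : ZMod n) = 0 := by
    have := (ZMod.intCast_eq_intCast_iff b 0 n).mpr hb
    simpa using this
  rw [gamma_right_zero n hn N (a, c) b d hbz, div_one]
  obtain ⟨m, hm⟩ : (n : ℤ) ∣ b := (ZMod.intCast_zmod_eq_zero_iff_dvd b n).mp hbz
  rcases le_or_gt 0 b with hbpos | hbneg
  · -- b ≥ 0
    have hm0 : 0 ≤ m := by
      rcases le_or_gt 0 m with h | h
      · exact h
      · exfalso; nlinarith [hm, (show (0:ℤ) < n by exact_mod_cast hn)]
    have hb' : b = ((n * m.toNat : ℕ) : ℤ) := by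
      rw [hm]; push_cast [Int.toNat_of_nonneg hm0]; ring
    have htoNat : b.toNat = n * m.toNat := by omega
    unfold gammaTildeN
    simp only [if_pos hbpos, haz, htoNat]
    rw [prodPos n hn N m.toNat, Circle.exp_pow]
    have : ((m.toNat : ℕ) : ℝ) = (m : ℝ) := by
      exact_mod_cast congrArg (Int.cast : ℤ → ℝ) (Int.toNat_of_nonneg hm0)
    rw [this, exp_arg_eq n hn N m]
    congr 1
    rw [hm]
    push_cast
    ring
  · -- b < 0
    have hm0 : m ≤ 0 := by
      rcases le_or_gt m 0 with h | h
      · exact h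
      · exfalso; nlinarith [hm, (show (0:ℤ) < n by exact_mod_cast hn)]
    have hb' : -b = ((n * (-m).toNat : ℕ) : ℤ) := by
      rw [hm]; push_cast [Int.toNat_of_nonneg (by omega : (0:ℤ) ≤ -m)]; ring
    have htoNat : (-b).toNat = n * (-m).toNat := by omega
    unfold gammaTildeN
    simp only [if_neg (by omega : ¬ (0:ℤ) ≤ b), haz, htoNat]
    rw [Finset.prod_inv_distrib]
    rw [prodNeg n hn N (-m).toNat, Circle.exp_pow, ← Circle.exp_neg]
    have hcast : (((-m).toNat : ℕ) : ℝ) = -(m : ℝ) := by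
      exact_mod_cast congrArg (Int.cast : ℤ → ℝ) (Int.toNat_of_nonneg (by omega : (0:ℤ) ≤ -m))
    rw [show -(((-m).toNat : ℕ) * (2 * π * N * ((1 : ZMod n)).val / n))
        = ((m : ℝ)) * (2 * π * N * ((1 : ZMod n)).val / n) by rw [hcast]; ring]
    rw [exp_arg_eq n hn N m]
    congr 1
    rw [hm]
    push_cast
    ring
end

section
/- Fix n ≥ 1. For every pair (x,y) ∈ (ℤ/nℤ)², there exists a matrix A ∈ SL₂(ℤ) such that A·(x,y) = (d mod n, 0), where d = gcd(x̃, ỹ, n) for any integer lifts x̃, ỹ of x, y. Consequently, the orbits of the SL₂(ℤ)-action on (ℤ/nℤ)² are in bijection with the positive divisors of n. -/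
/-- The orbit relation of the `SL₂(ℤ)`-action on `(ℤ/nℤ)²`. -/
def SL2Orbit (n : ℕ) (p p' : ZMod n × ZMod n) : Prop :=
  ∃ a b c d : ℤ, a * d - b * c = 1 ∧
    p' = ((a : ZMod n) * p.1 + (b : ZMod n) * p.2,
          (c : ZMod n) * p.1 + (d : ZMod n) * p.2)

lemma sl2orbit_refl (n : ℕ) (p : ZMod n × ZMod n) : SL2Orbit n p p :=
  ⟨1, 0, 0, 1, by ring, by push_cast; simp⟩

lemma sl2orbit_symm {n : ℕ} {p q : ZMod n × ZMod n} (h : SL2Orbit n p q) : SL2Orbit n q p := by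
  obtain ⟨a, b, c, d, hdet, rfl⟩ := h
  refine ⟨d, -b, -c, a, by linear_combination hdet, ?_⟩
  have hz : (a : ZMod n) * d - b * c = 1 := by
    have := congrArg (fun t : ℤ => (t : ZMod n)) hdet
    push_cast at this; simpa using this
  ext
  · show p.1 = _
    push_cast
    linear_combination -p.1 * hz
  · show p.2 = _
    push_cast
    linear_combination -p.2 * hz

lemma sl2orbit_trans {n : ℕ} {p q r : ZMod n × ZMod n}
    (h : SL2Orbit n p q) (h' : SL2Orbit n q r) : SL2Orbit n p r := by
  obtain ⟨a1, b1, c1, d1, hd1, rfl⟩ := h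
  obtain ⟨a2, b2, c2, d2, hd2, rfl⟩ := h'
  refine ⟨a2 * a1 + b2 * c1, a2 * b1 + b2 * d1, c2 * a1 + d2 * c1, c2 * b1 + d2 * d1,
    by linear_combination (a2 * d2 - b2 * c2) * hd1 + hd2, ?_⟩
  ext <;> · show _ = _ ; push_cast ; ring

lemma sl2orbit_gcd_dvd {n : ℕ} (hn : 0 < n) {p q : ZMod n × ZMod n} (h : SL2Orbit n p q) :
    Nat.gcd (Nat.gcd p.1.val p.2.val) n ∣ Nat.gcd (Nat.gcd q.1.val q.2.val) n := by
  haveI : NeZero n := ⟨hn.ne'⟩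
  obtain ⟨a, b, c, d, hdet, hq⟩ := h
  set δ : ℕ := Nat.gcd (Nat.gcd p.1.val p.2.val) n with hδ
  have hδ1 : (δ : ℤ) ∣ (p.1.val : ℤ) :=
    Int.natCast_dvd_natCast.mpr ((Nat.gcd_dvd_left _ _).trans (Nat.gcd_dvd_left _ _))
  have hδ2 : (δ : ℤ) ∣ (p.2.val : ℤ) :=
    Int.natCast_dvd_natCast.mpr ((Nat.gcd_dvd_left _ _).trans (Nat.gcd_dvd_right _ _))
  have hδn : (δ : ℤ) ∣ (n : ℤ) := Int.natCast_dvd_natCast.mpr (Nat.gcd_dvd_right _ _)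
  have hdvd : ∀ (z : ZMod n) (s t : ℤ), z = (s : ZMod n) * p.1 + (t : ZMod n) * p.2 →
      (δ : ℤ) ∣ (z.val : ℤ) := by
    intro z s t hzeq
    have hcast : ((s * (p.1.val : ℤ) + t * (p.2.val : ℤ) : ℤ) : ZMod n) = ((z.val : ℤ) : ZMod n) := by
      push_cast
      simp only [ZMod.natCast_val, ZMod.cast_id]
      rw [hzeq]
    have hmod := (ZMod.intCast_eq_intCast_iff _ _ _).mp hcast
    obtain ⟨k, hk⟩ := Int.ModEq.dvd hmod
    have : (z.val : ℤ) = s * (p.1.val : ℤ) + t * (p.2.val : ℤ) + n * k := by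
      linear_combination hk
    rw [this]
    exact dvd_add (dvd_add (Dvd.dvd.mul_left hδ1 s) (Dvd.dvd.mul_left hδ2 t))
      (Dvd.dvd.mul_right hδn _)
  have h1 : (δ : ℤ) ∣ (q.1.val : ℤ) := hdvd q.1 a b (by rw [hq])
  have h2 : (δ : ℤ) ∣ (q.2.val : ℤ) := hdvd q.2 c d (by rw [hq])
  exact Nat.dvd_gcd (Nat.dvd_gcd (Int.natCast_dvd_natCast.mp h1) (Int.natCast_dvd_natCast.mp h2))
    (Nat.gcd_dvd_right _ _)


lemma bezout_step (X Y : ℤ) :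
    ∃ a b c d : ℤ, a * d - b * c = 1 ∧ a * X + b * Y = Int.gcd X Y ∧ c * X + d * Y = 0 := by
  rcases eq_or_ne (Int.gcd X Y) 0 with h | h
  · have hX := Int.gcd_eq_zero_iff.mp h
    exact ⟨1, 0, 0, 1, by ring, by simp [hX.1, hX.2, h], by simp [hX.1, hX.2]⟩
  · set g : ℤ := (Int.gcd X Y : ℤ) with hgdef
    have hgne : g ≠ 0 := Int.natCast_ne_zero.mpr h
    obtain ⟨X', hX⟩ : g ∣ X := Int.gcd_dvd_left X Y
    obtain ⟨Y', hY⟩ : g ∣ Y := Int.gcd_dvd_right X Y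
    set a := Int.gcdA X Y
    set b := Int.gcdB X Y
    have hbez : g = X * a + Y * b := Int.gcd_eq_gcd_ab X Y
    have hdet : a * X' + b * Y' = 1 := by
      have : g * (a * X' + b * Y') = g * 1 := by
        rw [mul_one]; nth_rewrite 2 [hbez]; rw [hX, hY]; ring
      exact mul_left_cancel₀ hgne this
    exact ⟨a, b, -Y', X', by linear_combination hdet,
      by linear_combination -hbez, by rw [hX, hY]; ring⟩

lemma sl2_key (n : ℕ) (hn : 0 < n) (x y : ZMod n) :
    ∃ a b c d : ℤ, a * d - b * c = 1 ∧
      (a : ZMod n) * x + (b : ZMod n) * y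
        = ((Nat.gcd (Nat.gcd x.val y.val) n : ℕ) : ZMod n) ∧
      (c : ZMod n) * x + (d : ZMod n) * y = 0 := by
  haveI : NeZero n := ⟨hn.ne'⟩
  obtain ⟨a1, b1, c1, d1, h1, e1, e2⟩ := bezout_step (x.val : ℤ) (y.val : ℤ)
  set g : ℕ := Nat.gcd x.val y.val with hgdef
  rw [Int.gcd_natCast_natCast, ← hgdef] at e1
  set d0 : ℕ := Nat.gcd g n with hd0def
  have hd0ne : (d0 : ℤ) ≠ 0 := by
    have : 0 < d0 := Nat.gcd_pos_of_pos_right _ hn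
    exact_mod_cast this.ne'
  obtain ⟨g', hg'⟩ : (d0 : ℤ) ∣ (g : ℤ) := Int.natCast_dvd_natCast.mpr (Nat.gcd_dvd_left g n)
  obtain ⟨n', hn'⟩ : (d0 : ℤ) ∣ (n : ℤ) := Int.natCast_dvd_natCast.mpr (Nat.gcd_dvd_right g n)
  set u := Int.gcdA (g : ℤ) (n : ℤ)
  set v := Int.gcdB (g : ℤ) (n : ℤ)
  have hbez : (d0 : ℤ) = g * u + n * v := by
    have := Int.gcd_eq_gcd_ab (g : ℤ) (n : ℤ)
    rwa [Int.gcd_natCast_natCast] at this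
  have hdet2 : u * g' + v * n' = 1 := by
    have : (d0:ℤ) * (u * g' + v * n') = d0 * 1 := by
      rw [mul_one]; nth_rewrite 2 [hbez]; rw [hg', hn']; ring
    exact mul_left_cancel₀ hd0ne this
  refine ⟨u * a1 - v * c1, u * b1 - v * d1, n' * a1 + g' * c1, n' * b1 + g' * d1,
    by linear_combination (u * g' + v * n') * h1 + hdet2, ?_, ?_⟩
  · have claim1 : (u * a1 - v * c1) * (x.val : ℤ) + (u * b1 - v * d1) * (y.val : ℤ)
        = (d0 : ℤ) - n * v := by
      linear_combination u * e1 - v * e2 - hbez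
    have := congrArg (fun t : ℤ => (t : ZMod n)) claim1
    push_cast at this
    simpa [ZMod.natCast_val, ZMod.cast_id, ZMod.natCast_self] using this
  · have claim2 : (n' * a1 + g' * c1) * (x.val : ℤ) + (n' * b1 + g' * d1) * (y.val : ℤ)
        = (n : ℤ) * g' := by
      linear_combination n' * e1 + g' * e2 - g' * hn' + n' * hg'
    have := congrArg (fun t : ℤ => (t : ZMod n)) claim2
    push_cast at this
    simpa [ZMod.natCast_val, ZMod.cast_id, ZMod.natCast_self] using this

/-- Every `(x,y) ∈ (ℤ/nℤ)²` can be moved by `SL₂(ℤ)` to `(gcd(x̃,ỹ,n), 0)`;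
consequently the `SL₂(ℤ)`-orbits on `(ℤ/nℤ)²` are in bijection with the
positive divisors of `n`. -/
theorem SL2_orbits_on_ZMod_squared (n : ℕ) (hn : 0 < n) :
    (∀ x y : ZMod n, ∃ a b c d : ℤ, a * d - b * c = 1 ∧
      (a : ZMod n) * x + (b : ZMod n) * y
        = ((Nat.gcd (Nat.gcd x.val y.val) n : ℕ) : ZMod n) ∧
      (c : ZMod n) * x + (d : ZMod n) * y = 0) ∧
    Nonempty (Quot (SL2Orbit n) ≃ {d : ℕ // 0 < d ∧ d ∣ n}) := by
  haveI : NeZero n := ⟨hn.ne'⟩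
  refine ⟨fun x y => sl2_key n hn x y, ?_⟩
  set f : ZMod n × ZMod n → {d : ℕ // 0 < d ∧ d ∣ n} := fun p =>
    ⟨Nat.gcd (Nat.gcd p.1.val p.2.val) n, Nat.gcd_pos_of_pos_right _ hn,
      Nat.gcd_dvd_right _ _⟩ with hf
  have hinv : ∀ p q, SL2Orbit n p q → f p = f q := fun p q h =>
    Subtype.ext (Nat.dvd_antisymm (sl2orbit_gcd_dvd hn h) (sl2orbit_gcd_dvd hn (sl2orbit_symm h)))
  have horb : ∀ r : ZMod n × ZMod n, SL2Orbit n r ((((f r : ℕ) : ZMod n)), 0) := by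
    intro r
    obtain ⟨a, b, c, d, h1, h2, h3⟩ := sl2_key n hn r.1 r.2
    exact ⟨a, b, c, d, h1, Prod.ext h2.symm h3.symm⟩
  refine ⟨Equiv.ofBijective (Quot.lift f hinv) ⟨?_, ?_⟩⟩
  · rintro ⟨p⟩ ⟨q⟩ hpq
    have hpq' : f p = f q := hpq
    calc Quot.mk (SL2Orbit n) p
        = Quot.mk (SL2Orbit n) ((((f p : ℕ) : ZMod n)), 0) := Quot.sound (horb p)
      _ = Quot.mk (SL2Orbit n) ((((f q : ℕ) : ZMod n)), 0) := by rw [hpq']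
      _ = Quot.mk (SL2Orbit n) q := (Quot.sound (horb q)).symm
  · rintro ⟨d, hd0, hdn⟩
    refine ⟨Quot.mk _ ((d : ZMod n), 0), ?_⟩
    show f ((d : ZMod n), 0) = ⟨d, hd0, hdn⟩
    apply Subtype.ext
    show Nat.gcd (Nat.gcd (d : ZMod n).val (0 : ZMod n).val) n = d
    rw [ZMod.val_natCast, ZMod.val_zero, Nat.gcd_zero_right, ← Nat.gcd_rec,
      Nat.gcd_eq_right hdn]
end
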